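/- Fix an alphabet A and n ≥ 1, and let T_2 and the cascade strings u_1, …, u_n be as in the ripple-carry construction: T_2(Λ) = 0, T_2(wa) = T_2(w) + 1 mod 2; u_i(Λ) = Λ; u_1(wa) = u_1(w) ∘ ⟨a⟩; for i ≥ 2, u_i(wa) = u_i(w) ∘ ⟨a⟩ if T_2(u_j(w)) = 1 for every j < i, and u_i(wa) = u_i(w) otherwise. Then for every 1 ≤ i ≤ n and every w ∈ A*, T_2(u_i(w)) = ⌊|w| / 2^{i-1}⌋ mod 2, i.e., T_2(u_i(w)) is the (i−1)-st binary digit of |w|. -/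

import Mathlib

lemma key_iff (i l : ℕ) : (∀ j < i, (l / 2^j) % 2 = 1) ↔ 2^i ∣ (l+1) := by
  induction i generalizing l with
  | zero => simp
  | succ i ih =>
    constructor
    · intro h
      have h0 : l % 2 = 1 := by simpa using h 0 (Nat.succ_pos i)
      have h1 : 2^i ∣ (l/2 + 1) := by
        rw [← ih]
        intro j hj
        have := h (j+1) (by omega)
        rwa [pow_succ, mul_comm, ← Nat.div_div_eq_div_mul] at this
      obtain ⟨k, hk⟩ := h1
      refine ⟨k, ?_⟩
      have hl : l = 2 * (l/2) + 1 := by omega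
      rw [pow_succ, mul_comm (2^i) 2, mul_assoc]
      omega
    · rintro ⟨k, hk⟩ j hj
      have hk' : l + 1 = 2 * (2^i * k) := by rw [hk, pow_succ]; ring
      have h0 : l % 2 = 1 := by omega
      rcases Nat.eq_zero_or_pos j with rfl | hj0
      · simpa using h0
      · obtain ⟨j', rfl⟩ := Nat.exists_eq_add_of_le hj0
        have : 2^i ∣ (l/2 + 1) := ⟨k, by omega⟩
        have h2 := (ih (l/2)).mpr this (j') (by omega)
        rw [show Nat.succ 0 + j' = j' + 1 from by omega, pow_succ, mul_comm,
          ← Nat.div_div_eq_div_mul]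
        exact h2

/-- in the ripple-carry cascade of `n` mod-2 counters, the `i`-th counter
outputs the corresponding binary digit of the input length:
`T₂(uᵢ(w)) = ⌊|w| / 2^{i-1}⌋ mod 2`.  (Here the factor of index `i ∈ Fin n`
corresponds to the `(i+1)`-st counter of the paper, so the exponent is `i.val`.)
`T₂` and the cascade strings `uᵢ` are given by their defining recursions as
hypotheses. -/
theorem stmt13 {A : Type*} (n : ℕ) (hn : 1 ≤ n)
    (T2 : List A → ℕ)
    (hT0 : T2 [] = 0)
    (hTa : ∀ (w : List A) (a : A), T2 (w ++ [a]) = (T2 w + 1) % 2)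
    (u : Fin n → List A → List A)
    (hu0 : ∀ i, u i [] = [])
    (hu1 : ∀ (w : List A) (a : A), u ⟨0, hn⟩ (w ++ [a]) = u ⟨0, hn⟩ w ++ [a])
    (huiYes : ∀ (i : Fin n) (w : List A) (a : A), 0 < i.val →
      (∀ j < i, T2 (u j w) = 1) → u i (w ++ [a]) = u i w ++ [a])
    (huiNo : ∀ (i : Fin n) (w : List A) (a : A), 0 < i.val →
      ¬ (∀ j < i, T2 (u j w) = 1) → u i (w ++ [a]) = u i w) :
    ∀ (i : Fin n) (w : List A), T2 (u i w) = (w.length / 2 ^ i.val) % 2 := by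
  intro i w
  induction w using List.reverseRecOn generalizing i with
  | nil => simp [hu0, hT0]
  | append_singleton w a ih =>
    set l := w.length with hl
    have hlen : (w ++ [a]).length = l + 1 := by simp [hl]
    rw [hlen]
    -- translate the gate condition
    have hcond : (∀ j < i, T2 (u j w) = 1) ↔ (∀ j < i.val, (l / 2^j) % 2 = 1) := by
      constructor
      · intro h j hj
        have := h ⟨j, lt_trans hj i.isLt⟩ (Fin.lt_def.mpr hj)
        rw [ih] at this
        simpa using this
      · intro h j hj
        rw [ih]
        exact h j.val (Fin.lt_def.mp hj)
    rcases Nat.eq_zero_or_pos i.val with hi0 | hi0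
    · have : i = ⟨0, hn⟩ := Fin.ext hi0
      subst this
      rw [hu1, hTa, ih]
      simp only [pow_zero, Nat.div_one]
      omega
    · by_cases hc : ∀ j < i, T2 (u j w) = 1
      · rw [huiYes i w a hi0 hc, hTa, ih]
        have hdvd : 2 ^ i.val ∣ (l + 1) := (key_iff i.val l).mp (hcond.mp hc)
        rw [Nat.succ_div, if_pos hdvd]
        omega
      · rw [huiNo i w a hi0 hc]
        have hndvd : ¬ 2 ^ i.val ∣ (l + 1) := fun h =>
          hc (hcond.mpr ((key_iff i.val l).mpr h))
        rw [ih, Nat.succ_div, if_neg hndvd]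
        omega
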